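/- If Z is a Poisson random variable with rate m and k < m is a nonnegative integer, then P(Z ≤ k) ≤ e^{−m} (em)^k / k^k. -/

import Mathlib

open ProbabilityTheory Real Finset in
lemma aux_sum_bound (m : NNReal) (k : ℕ) (hk : (k : ℝ) < (m : ℝ)) :
    ∑ i ∈ range (k + 1), Real.exp (-(m : ℝ)) * (m : ℝ) ^ i / (Nat.factorial i) ≤
      Real.exp (-(m : ℝ)) * (Real.exp 1 * (m : ℝ)) ^ k / (k : ℝ) ^ k := by
  have hm : (0 : ℝ) < (m : ℝ) := lt_of_le_of_lt (Nat.cast_nonneg k) hk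
  have hkk : (0 : ℝ) < (k : ℝ) ^ k := by
    rcases Nat.eq_zero_or_pos k with h | h
    · simp [h]
    · positivity
  have key : ∑ i ∈ range (k + 1), (m : ℝ) ^ i / (Nat.factorial i) ≤
      (Real.exp 1 * (m : ℝ)) ^ k / (k : ℝ) ^ k := by
    have step : ∀ i ∈ range (k + 1),
        (m : ℝ) ^ i / (Nat.factorial i) ≤
          (m : ℝ) ^ k / (k : ℝ) ^ k * ((k : ℝ) ^ i / (Nat.factorial i)) := by
      intro i hi
      have hik : i ≤ k := Nat.lt_succ_iff.mp (mem_range.mp hi)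
      have hfac : (0 : ℝ) < (Nat.factorial i : ℝ) := by positivity
      have h1 : (k : ℝ) ^ (k - i) ≤ (m : ℝ) ^ (k - i) :=
        pow_le_pow_left₀ (Nat.cast_nonneg k) hk.le _
      have hmk : (m : ℝ) ^ k = (m : ℝ) ^ i * (m : ℝ) ^ (k - i) := by
        rw [← pow_add, Nat.add_sub_cancel' hik]
      have hkk2 : (k : ℝ) ^ k = (k : ℝ) ^ i * (k : ℝ) ^ (k - i) := by
        rw [← pow_add, Nat.add_sub_cancel' hik]
      rw [div_mul_div_comm, div_le_div_iff₀ hfac (mul_pos hkk hfac), hmk, hkk2]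
      have h2 : (m : ℝ) ^ i * ((k : ℝ) ^ i * (Nat.factorial i)) * (k : ℝ) ^ (k - i) ≤
          (m : ℝ) ^ i * ((k : ℝ) ^ i * (Nat.factorial i)) * (m : ℝ) ^ (k - i) :=
        mul_le_mul_of_nonneg_left h1 (by positivity)
      nlinarith [h2]
    calc ∑ i ∈ range (k + 1), (m : ℝ) ^ i / (Nat.factorial i)
        ≤ ∑ i ∈ range (k + 1), (m : ℝ) ^ k / (k : ℝ) ^ k * ((k : ℝ) ^ i / (Nat.factorial i)) :=
          Finset.sum_le_sum step
      _ = (m : ℝ) ^ k / (k : ℝ) ^ k * ∑ i ∈ range (k + 1), (k : ℝ) ^ i / (Nat.factorial i) := by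
          rw [Finset.mul_sum]
      _ ≤ (m : ℝ) ^ k / (k : ℝ) ^ k * Real.exp k := by
          apply mul_le_mul_of_nonneg_left _ (by positivity)
          exact Real.sum_le_exp_of_nonneg (Nat.cast_nonneg k) (k + 1)
      _ = (Real.exp 1 * (m : ℝ)) ^ k / (k : ℝ) ^ k := by
          rw [mul_pow, ← Real.exp_nat_mul]
          field_simp
  calc ∑ i ∈ range (k + 1), Real.exp (-(m : ℝ)) * (m : ℝ) ^ i / (Nat.factorial i)
      = Real.exp (-(m : ℝ)) * ∑ i ∈ range (k + 1), (m : ℝ) ^ i / (Nat.factorial i) := by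
        rw [Finset.mul_sum]; apply Finset.sum_congr rfl; intros; ring
    _ ≤ Real.exp (-(m : ℝ)) * ((Real.exp 1 * (m : ℝ)) ^ k / (k : ℝ) ^ k) :=
        mul_le_mul_of_nonneg_left key (Real.exp_nonneg _)
    _ = Real.exp (-(m : ℝ)) * (Real.exp 1 * (m : ℝ)) ^ k / (k : ℝ) ^ k := by ring

open ProbabilityTheory in
/-- If `Z` is Poisson with rate `m` and `k < m` is a nonnegative integer, then
`P(Z ≤ k) ≤ e^{-m} (em)^k / k^k`. -/
theorem stmt_14 (m : NNReal) (k : ℕ) (hk : (k : ℝ) < (m : ℝ)) :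
    poissonMeasure m {i : ℕ | i ≤ k} ≤
      ENNReal.ofReal (Real.exp (-(m : ℝ)) * (Real.exp 1 * (m : ℝ)) ^ k / (k : ℝ) ^ k) := by
  have hset : {i : ℕ | i ≤ k} = ↑(Finset.range (k + 1)) := by
    ext i; simp [Nat.lt_succ_iff]
  rw [hset, ← MeasureTheory.sum_measure_singleton]
  simp_rw [poissonMeasure_singleton]
  rw [← ENNReal.ofReal_sum_of_nonneg (fun i _ => by positivity)]
  apply ENNReal.ofReal_le_ofReal
  simpa using aux_sum_bound m k hk
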